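/- arXiv:1211.0407 — 2 statements merged into one kernel-verified Lean document; each statement's English description precedes it below -/
import Mathlib

section
/- Let V be a countable set with symmetric b : V × V → [0,∞), b(x,x)=0, locally finite, μ : V → (0,∞), and a phase θ with θ(x,y) = −θ(y,x). Let H = Δ_{b,μ;θ} + W be the magnetic Schrödinger operator. If v ∈ ℓ²_μ(V) satisfies Hv = 0 pointwise and f : V → ℝ is finitely supported, then ⟨f v, H(f v)⟩ = (1/2) ∑_{x∈V} ∑_{y: b(x,y)>0} b(x,y) Re(e^{−iθ(x,y)} v(x) conj(v(y))) (f(x) − f(y))². -/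
open scoped BigOperators
open Complex

theorem stmt2 {V : Type*} [Countable V]
    (b : V → V → ℝ) (μ : V → ℝ) (θ : V → V → ℝ) (W : V → ℝ)
    (hb_nonneg : ∀ x y, 0 ≤ b x y) (hb_symm : ∀ x y, b x y = b y x)
    (hb_diag : ∀ x, b x x = 0)
    (hb_locfin : ∀ x, {y | 0 < b x y}.Finite)
    (hμ : ∀ x, 0 < μ x)
    (hθ : ∀ x y, θ x y = -θ y x)
    (H : (V → ℂ) → V → ℂ)
    (hH : ∀ u x, H u x
      = (1 / (μ x : ℂ)) * ∑' y, (b x y : ℂ) * (u x - Complex.exp (θ x y * Complex.I) * u y)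
        + (W x : ℂ) * u x)
    (v : V → ℂ) (hv_l2 : Summable fun x => μ x * ‖v x‖ ^ 2)
    (hv_sol : ∀ x, H v x = 0)
    (f : V → ℝ) (hf : (Function.support f).Finite) :
    (∑' x, (μ x : ℂ) * ((f x : ℂ) * v x)
        * starRingEnd ℂ (H (fun y => (f y : ℂ) * v y) x))
      = ((1 / 2 : ℝ) * ∑' x, ∑' y, b x y
          * (Complex.exp (-θ x y * Complex.I) * v x * starRingEnd ℂ (v y)).re
          * (f x - f y) ^ 2 : ℝ) := by
  classical
  set S : Finset V := hf.toFinset with hSdef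
  set N : V → Finset V := fun x => (hb_locfin x).toFinset with hNdef
  have hmemN : ∀ x y, y ∈ N x ↔ 0 < b x y := by
    intro x y; simp [hNdef, Set.Finite.mem_toFinset]
  have hmemS : ∀ x, x ∈ S ↔ f x ≠ 0 := by
    intro x; simp [hSdef, Set.Finite.mem_toFinset, Function.mem_support]
  have hb0 : ∀ x y, y ∉ N x → b x y = 0 := by
    intro x y hy
    have h : ¬ 0 < b x y := fun h => hy ((hmemN x y).2 h)
    exact le_antisymm (not_lt.1 h) (hb_nonneg x y)
  have hNsymm : ∀ x y, y ∈ N x → x ∈ N y := by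
    intro x y h
    rw [hmemN] at h ⊢
    rwa [hb_symm] at h
  set T : Finset V := S ∪ S.biUnion N with hTdef
  set U : Finset V := T ∪ T.biUnion N with hUdef
  have hST : S ⊆ T := Finset.subset_union_left
  have hTU : T ⊆ U := Finset.subset_union_left
  have hNT : ∀ x ∈ S, N x ⊆ T :=
    fun x hx => (Finset.subset_biUnion_of_mem N hx).trans Finset.subset_union_right
  have hNU : ∀ x ∈ T, N x ⊆ U :=
    fun x hx => (Finset.subset_biUnion_of_mem N hx).trans Finset.subset_union_right
  have hμc : ∀ x, (μ x : ℂ) ≠ 0 := fun x => by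
    exact_mod_cast (hμ x).ne'
  have hfU : ∀ x, x ∉ U → f x = 0 := by
    intro x hx
    by_contra h
    exact hx (hTU (hST ((hmemS x).2 h)))
  -- conjugate of exponential
  have hconj : ∀ t : ℝ, starRingEnd ℂ (Complex.exp (t * Complex.I)) = Complex.exp (-t * Complex.I) := by
    intro t
    rw [← Complex.exp_conj]
    congr 1
    rw [map_mul, Complex.conj_ofReal, Complex.conj_I]
    ring
  -- the equation from H v = 0
  set cR : V → ℝ := fun x => (∑ y ∈ N x, b x y) + μ x * W x with hcRdef
  have hμHv : ∀ x, ∑ y ∈ N x, (b x y : ℂ) * Complex.exp (θ x y * Complex.I) * v y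
      = (cR x : ℂ) * v x := by
    intro x
    have h0 := hv_sol x
    rw [hH] at h0
    have htsum : ∑' y, (b x y : ℂ) * (v x - Complex.exp (θ x y * Complex.I) * v y)
        = ∑ y ∈ N x, (b x y : ℂ) * (v x - Complex.exp (θ x y * Complex.I) * v y) :=
      tsum_eq_sum (fun y hy => by rw [hb0 x y hy]; simp)
    rw [htsum] at h0
    have h1 : ∑ y ∈ N x, (b x y : ℂ) * (v x - Complex.exp (θ x y * Complex.I) * v y)
        = -((μ x : ℂ) * ((W x : ℂ) * v x)) := by
      have h2 := congrArg (fun z => (μ x : ℂ) * z) h0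
      simp only [mul_add, mul_zero] at h2
      rw [← mul_assoc, mul_one_div_cancel (hμc x), one_mul] at h2
      linear_combination h2
    have h3 : ∑ y ∈ N x, (b x y : ℂ) * (v x - Complex.exp (θ x y * Complex.I) * v y)
        = (∑ y ∈ N x, (b x y : ℂ)) * v x
          - ∑ y ∈ N x, (b x y : ℂ) * Complex.exp (θ x y * Complex.I) * v y := by
      rw [Finset.sum_mul, ← Finset.sum_sub_distrib]
      exact Finset.sum_congr rfl fun y _ => by ring
    have hc : (cR x : ℂ) = (∑ y ∈ N x, (b x y : ℂ)) + (μ x : ℂ) * (W x : ℂ) := by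
      rw [hcRdef]; push_cast; ring
    rw [hc]
    linear_combination h3 - h1
  -- the key pointwise formula for μ x * H (f v) x
  set g : V → ℂ := fun y => (f y : ℂ) * v y with hgdef
  have hHg : ∀ x, (μ x : ℂ) * H g x
      = ∑ y ∈ N x, (b x y : ℂ) * Complex.exp (θ x y * Complex.I) * v y * ((f x : ℂ) - (f y : ℂ)) := by
    intro x
    rw [hH]
    have htsum : ∑' y, (b x y : ℂ) * (g x - Complex.exp (θ x y * Complex.I) * g y)
        = ∑ y ∈ N x, (b x y : ℂ) * (g x - Complex.exp (θ x y * Complex.I) * g y) :=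
      tsum_eq_sum (fun y hy => by rw [hb0 x y hy]; simp)
    rw [mul_add, htsum, ← mul_assoc, mul_one_div_cancel (hμc x), one_mul]
    have h3 : ∑ y ∈ N x, (b x y : ℂ) * (g x - Complex.exp (θ x y * Complex.I) * g y)
        = (∑ y ∈ N x, (b x y : ℂ) * Complex.exp (θ x y * Complex.I) * v y * ((f x : ℂ) - (f y : ℂ)))
          - (f x : ℂ) * (∑ y ∈ N x, (b x y : ℂ) * Complex.exp (θ x y * Complex.I) * v y)
          + (f x : ℂ) * v x * (∑ y ∈ N x, (b x y : ℂ)) := by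
      rw [Finset.mul_sum, Finset.mul_sum, ← Finset.sum_sub_distrib, ← Finset.sum_add_distrib]
      refine Finset.sum_congr rfl fun y _ => ?_
      simp only [hgdef]
      ring
    rw [h3, hμHv x]
    simp only [hgdef, hcRdef]
    push_cast
    ring
  -- pointwise formula for the summand of the LHS
  have hterm : ∀ x, (μ x : ℂ) * ((f x : ℂ) * v x) * starRingEnd ℂ (H g x)
      = ∑ y ∈ U, (b x y : ℂ) * Complex.exp (-θ x y * Complex.I) * v x * starRingEnd ℂ (v y)
          * (f x : ℂ) * ((f x : ℂ) - (f y : ℂ)) := by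
    intro x
    by_cases hfx : f x = 0
    · simp [hfx]
    · have hxS : x ∈ S := (hmemS x).2 hfx
      have hNxU : N x ⊆ U := hNU x (hST hxS)
      have hsub : ∑ y ∈ U, (b x y : ℂ) * Complex.exp (-θ x y * Complex.I) * v x * starRingEnd ℂ (v y)
            * (f x : ℂ) * ((f x : ℂ) - (f y : ℂ))
          = ∑ y ∈ N x, (b x y : ℂ) * Complex.exp (-θ x y * Complex.I) * v x * starRingEnd ℂ (v y)
            * (f x : ℂ) * ((f x : ℂ) - (f y : ℂ)) :=
        (Finset.sum_subset hNxU (fun y _ hy => by rw [hb0 x y hy]; simp)).symm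
      rw [hsub]
      have h1 : (μ x : ℂ) * ((f x : ℂ) * v x) * starRingEnd ℂ (H g x)
          = ((f x : ℂ) * v x) * starRingEnd ℂ ((μ x : ℂ) * H g x) := by
        rw [map_mul, Complex.conj_ofReal]; ring
      rw [h1, hHg x, map_sum, Finset.mul_sum]
      refine Finset.sum_congr rfl fun y hy => ?_
      rw [map_mul, map_mul, map_mul, map_sub, Complex.conj_ofReal, Complex.conj_ofReal,
        Complex.conj_ofReal, hconj]
      ring
  -- abbreviation for the kernel
  set Tc : V → V → ℂ := fun x y =>
    (b x y : ℂ) * Complex.exp (-θ x y * Complex.I) * v x * starRingEnd ℂ (v y) with hTcdef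
  have hconj2 : ∀ t : ℝ, starRingEnd ℂ (Complex.exp (-t * Complex.I)) = Complex.exp (t * Complex.I) := by
    intro t
    rw [← Complex.exp_conj]
    congr 1
    rw [map_mul, map_neg, Complex.conj_ofReal, Complex.conj_I]
    ring
  have hTconj : ∀ x y, starRingEnd ℂ (Tc x y) = Tc y x := by
    intro x y
    simp only [hTcdef, map_mul, Complex.conj_ofReal, Complex.conj_conj, hconj2]
    rw [hb_symm y x, hθ y x]
    simp only [Complex.ofReal_neg, neg_neg]
    ring
  -- row sums of Tc are "real"
  have hrow : ∀ x, f x ≠ 0 → ∑ y ∈ U, Tc x y = (cR x : ℂ) * (Complex.normSq (v x) : ℂ) := by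
    intro x hfx
    have hxS : x ∈ S := (hmemS x).2 hfx
    have hNxU : N x ⊆ U := hNU x (hST hxS)
    have hsub : ∑ y ∈ U, Tc x y = ∑ y ∈ N x, Tc x y :=
      (Finset.sum_subset hNxU (fun y _ hy => by simp [hTcdef, hb0 x y hy])).symm
    have h1 : ∑ y ∈ N x, Tc x y
        = v x * starRingEnd ℂ (∑ y ∈ N x, (b x y : ℂ) * Complex.exp (θ x y * Complex.I) * v y) := by
      rw [map_sum, Finset.mul_sum]
      refine Finset.sum_congr rfl fun y hy => ?_
      simp only [hTcdef]
      rw [map_mul, map_mul, Complex.conj_ofReal, hconj]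
      ring
    rw [hsub, h1, hμHv x, map_mul, Complex.conj_ofReal, ← mul_assoc, mul_comm (v x),
      mul_assoc, Complex.mul_conj]
  have hcol : ∀ y, f y ≠ 0 → ∑ x ∈ U, Tc x y = (cR y : ℂ) * (Complex.normSq (v y) : ℂ) := by
    intro y hfy
    have h1 : ∑ x ∈ U, Tc x y = starRingEnd ℂ (∑ x ∈ U, Tc y x) := by
      rw [map_sum]
      exact Finset.sum_congr rfl fun x _ => by rw [hTconj]
    rw [h1, hrow y hfy, map_mul, Complex.conj_ofReal, Complex.conj_ofReal]
  -- the main finite double sums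
  set L : ℂ := ∑ x ∈ U, ∑ y ∈ U, Tc x y * (f x : ℂ) * ((f x : ℂ) - (f y : ℂ)) with hLdef
  set L' : ℂ := ∑ x ∈ U, ∑ y ∈ U, Tc x y * (f y : ℂ) * ((f y : ℂ) - (f x : ℂ)) with hL'def
  have hXfx : ∑ x ∈ U, ∑ y ∈ U, Tc x y * (f x : ℂ)^2
      = ∑ x ∈ U, ((f x : ℂ)^2 * ((cR x : ℂ) * (Complex.normSq (v x) : ℂ))) := by
    refine Finset.sum_congr rfl fun x _ => ?_
    rw [← Finset.sum_mul]
    by_cases hfx : f x = 0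
    · simp [hfx]
    · rw [hrow x hfx]; ring
  have hXfy : ∑ x ∈ U, ∑ y ∈ U, Tc x y * (f y : ℂ)^2
      = ∑ y ∈ U, ((f y : ℂ)^2 * ((cR y : ℂ) * (Complex.normSq (v y) : ℂ))) := by
    rw [Finset.sum_comm]
    refine Finset.sum_congr rfl fun y _ => ?_
    rw [← Finset.sum_mul]
    by_cases hfy : f y = 0
    · simp [hfy]
    · rw [hcol y hfy]; ring
  have hLL' : L = L' := by
    have h : L - L' = 0 := by
      have h1 : L - L' = ∑ x ∈ U, ∑ y ∈ U, (Tc x y * (f x : ℂ)^2 - Tc x y * (f y : ℂ)^2) := by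
        rw [hLdef, hL'def, ← Finset.sum_sub_distrib]
        refine Finset.sum_congr rfl fun x _ => ?_
        rw [← Finset.sum_sub_distrib]
        exact Finset.sum_congr rfl fun y _ => by ring
      rw [h1]
      have h2 : ∑ x ∈ U, ∑ y ∈ U, (Tc x y * (f x : ℂ)^2 - Tc x y * (f y : ℂ)^2)
          = (∑ x ∈ U, ∑ y ∈ U, Tc x y * (f x : ℂ)^2)
            - ∑ x ∈ U, ∑ y ∈ U, Tc x y * (f y : ℂ)^2 := by
        rw [← Finset.sum_sub_distrib]
        exact Finset.sum_congr rfl fun x _ => by rw [← Finset.sum_sub_distrib]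
      rw [h2, hXfx, hXfy, sub_self]
    exact sub_eq_zero.mp h
  have hconjL : starRingEnd ℂ L = L := by
    have h1 : starRingEnd ℂ L
        = ∑ x ∈ U, ∑ y ∈ U, Tc y x * (f x : ℂ) * ((f x : ℂ) - (f y : ℂ)) := by
      rw [hLdef, map_sum]
      refine Finset.sum_congr rfl fun x _ => ?_
      rw [map_sum]
      refine Finset.sum_congr rfl fun y _ => ?_
      simp only [map_mul, map_sub, Complex.conj_ofReal, hTconj]
    rw [h1, Finset.sum_comm, ← hL'def]
    exact hLL'.symm
  have h2L : 2 * L = ∑ x ∈ U, ∑ y ∈ U, Tc x y * ((f x : ℂ) - (f y : ℂ))^2 := by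
    have h0 : 2 * L = L + L' := by rw [← hLL']; ring
    rw [h0, hLdef, hL'def, ← Finset.sum_add_distrib]
    refine Finset.sum_congr rfl fun x _ => ?_
    rw [← Finset.sum_add_distrib]
    exact Finset.sum_congr rfl fun y _ => by ring
  have hLre : ((L.re : ℝ) : ℂ) = L := Complex.conj_eq_iff_re.mp hconjL
  have hre2 : (2 * L).re = ∑ x ∈ U, ∑ y ∈ U, (b x y
      * (Complex.exp (-θ x y * Complex.I) * v x * starRingEnd ℂ (v y)).re
      * (f x - f y) ^ 2) := by
    rw [h2L, Complex.re_sum]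
    refine Finset.sum_congr rfl fun x _ => ?_
    rw [Complex.re_sum]
    refine Finset.sum_congr rfl fun y _ => ?_
    have hh : Tc x y * ((f x : ℂ) - (f y : ℂ))^2
        = ((b x y * (f x - f y)^2 : ℝ) : ℂ)
          * (Complex.exp (-θ x y * Complex.I) * v x * starRingEnd ℂ (v y)) := by
      simp only [hTcdef]
      push_cast
      ring
    rw [hh, Complex.re_ofReal_mul]
    ring
  -- reduce the LHS tsum
  have hLHSt : (∑' x, (μ x : ℂ) * ((f x : ℂ) * v x) * starRingEnd ℂ (H g x)) = L := by
    rw [tsum_eq_sum (s := U) (fun x hx => by simp [hfU x hx]), hLdef]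
    refine Finset.sum_congr rfl fun x _ => ?_
    exact hterm x
  -- reduce the RHS tsum
  have hinner : ∀ x, (∑' y, b x y
      * (Complex.exp (-θ x y * Complex.I) * v x * starRingEnd ℂ (v y)).re
      * (f x - f y) ^ 2)
      = ∑ y ∈ N x, b x y
      * (Complex.exp (-θ x y * Complex.I) * v x * starRingEnd ℂ (v y)).re
      * (f x - f y) ^ 2 :=
    fun x => tsum_eq_sum (fun y hy => by rw [hb0 x y hy]; simp)
  have hext : ∀ x, (∑ y ∈ N x, b x y
      * (Complex.exp (-θ x y * Complex.I) * v x * starRingEnd ℂ (v y)).re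
      * (f x - f y) ^ 2)
      = ∑ y ∈ U, b x y
      * (Complex.exp (-θ x y * Complex.I) * v x * starRingEnd ℂ (v y)).re
      * (f x - f y) ^ 2 := by
    intro x
    have h1 : (∑ y ∈ N x, b x y
        * (Complex.exp (-θ x y * Complex.I) * v x * starRingEnd ℂ (v y)).re
        * (f x - f y) ^ 2)
        = ∑ y ∈ N x ∪ U, b x y
        * (Complex.exp (-θ x y * Complex.I) * v x * starRingEnd ℂ (v y)).re
        * (f x - f y) ^ 2 :=
      Finset.sum_subset Finset.subset_union_left
        (fun y _ hy => by rw [hb0 x y hy]; simp)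
    have h2 : (∑ y ∈ U, b x y
        * (Complex.exp (-θ x y * Complex.I) * v x * starRingEnd ℂ (v y)).re
        * (f x - f y) ^ 2)
        = ∑ y ∈ N x ∪ U, b x y
        * (Complex.exp (-θ x y * Complex.I) * v x * starRingEnd ℂ (v y)).re
        * (f x - f y) ^ 2 := by
      refine Finset.sum_subset Finset.subset_union_right ?_
      intro y hyNU hyU
      have hyN : y ∈ N x := by
        rcases Finset.mem_union.1 hyNU with h | h
        · exact h
        · exact absurd h hyU
      have hfy : f y = 0 := by
        by_contra h
        exact hyU (hTU (hST ((hmemS y).2 h)))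
      have hfx : f x = 0 := by
        by_contra h
        exact hyU (hNU x (hST ((hmemS x).2 h)) hyN)
      rw [hfx, hfy]
      simp
    rw [h1, h2]
  have houter : ∀ x, x ∉ U → (∑ y ∈ N x, b x y
      * (Complex.exp (-θ x y * Complex.I) * v x * starRingEnd ℂ (v y)).re
      * (f x - f y) ^ 2) = 0 := by
    intro x hx
    refine Finset.sum_eq_zero fun y hyN => ?_
    have hfy : f y = 0 := by
      by_contra h
      exact hx (hTU (hNT y ((hmemS y).2 h) (hNsymm x y hyN)))
    rw [hfU x hx, hfy]
    simp
  have hRt : (∑' x, ∑' y, b x y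
      * (Complex.exp (-θ x y * Complex.I) * v x * starRingEnd ℂ (v y)).re
      * (f x - f y) ^ 2)
      = ∑ x ∈ U, ∑ y ∈ U, b x y
      * (Complex.exp (-θ x y * Complex.I) * v x * starRingEnd ℂ (v y)).re
      * (f x - f y) ^ 2 := by
    rw [tsum_congr hinner, tsum_eq_sum (s := U) houter]
    exact Finset.sum_congr rfl fun x _ => hext x
  rw [hLHSt, hRt, ← hLre]
  have h5 : (2 * L).re = 2 * L.re := by
    rw [two_mul, Complex.add_re, two_mul]
  have h6 : L.re = (1 / 2 : ℝ) * ∑ x ∈ U, ∑ y ∈ U, b x y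
      * (Complex.exp (-θ x y * Complex.I) * v x * starRingEnd ℂ (v y)).re
      * (f x - f y) ^ 2 := by
    rw [← hre2, h5]
    ring
  exact_mod_cast congrArg (fun r : ℝ => (r : ℂ)) h6
end

section
/- Let G = (V,E) be a graph with edge weights b : V × V → [0,∞) (symmetric, vanishing on the diagonal), μ : V → (0,∞), and phase θ with θ(x,y) = −θ(y,x). Suppose (V_l, E_l)_{l∈L} is a family of finite subgraphs with V = ⋃_l V_l and for every edge {x,y} ∈ E, 1 ≤ #{l : {x,y} ∈ E_l} ≤ m (a good covering of degree m). For each l, let p_l ≥ 0 be a constant such that for every u : V_l → ℂ, ∑_{{x,y}∈E_l} |u(x) − e^{iθ(x,y)}u(y)|² ≥ p_l ∑_{x∈V_l} μ(x)|u(x)|². Define W_e(x) = (1/m) ∑_{l : x ∈ V_l} p_l · inf_{{y,z}∈E_l} b(y,z). Then for every finitely supported u : V → ℂ and every real potential W, ⟨u, Hu⟩ ≥ ∑_{x∈V} μ(x)(W_e(x) + W(x)) |u(x)|², where H = Δ_{b,μ;θ} + W. -/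
open scoped BigOperators
open Complex

theorem stmt13 {V L : Type*} [Countable V]
    (b : V → V → ℝ) (μ : V → ℝ) (θ : V → V → ℝ) (W : V → ℝ) (m : ℕ) (hm : 1 ≤ m)
    (hb_nonneg : ∀ x y, 0 ≤ b x y) (hb_symm : ∀ x y, b x y = b y x)
    (hb_diag : ∀ x, b x x = 0)
    (hb_locfin : ∀ x, {y | 0 < b x y}.Finite)
    (hμ : ∀ x, 0 < μ x)
    (hθ : ∀ x y, θ x y = -θ y x)
    (Vl : L → Finset V) (El : L → Finset (V × V))
    -- the subgraphs consist of edges of `G` with endpoints in `Vl`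
    (hEl : ∀ l, ∀ e ∈ El l, 0 < b e.1 e.2 ∧ e.1 ∈ Vl l ∧ e.2 ∈ Vl l)
    (hEl_symm : ∀ l x y, (x, y) ∈ El l ↔ (y, x) ∈ El l)
    -- good covering of degree `m`
    (hcover : ∀ x : V, ∃ l, x ∈ Vl l)
    (hdeg : ∀ x y, 0 < b x y →
      1 ≤ {l | (x, y) ∈ El l}.ncard ∧ {l | (x, y) ∈ El l}.ncard ≤ m)
    -- `p l` is a lower bound for the bottom of the spectrum of the magnetic
    -- Laplacian with weight `1` on the subgraph `l` (ordered pairs, hence the `1/2`)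
    (p : L → ℝ) (hp_nonneg : ∀ l, 0 ≤ p l)
    (hp : ∀ l, ∀ u : V → ℂ,
      p l * ∑ x ∈ Vl l, μ x * ‖u x‖ ^ 2
        ≤ (1 / 2) * ∑ e ∈ El l, ‖u e.1 - Complex.exp (θ e.1 e.2 * Complex.I) * u e.2‖ ^ 2)
    -- the effective potential
    (We : V → ℝ)
    (hWe : ∀ x, We x = (1 / m) * ∑ᶠ l ∈ {l | x ∈ Vl l},
      p l * sInf ((fun e : V × V => b e.1 e.2) '' (El l : Set (V × V))))
    -- the magnetic Schrödinger operator
    (H : (V → ℂ) → V → ℂ)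
    (hH : ∀ u x, H u x
      = (1 / (μ x : ℂ)) * ∑' y, (b x y : ℂ) * (u x - Complex.exp (θ x y * Complex.I) * u y)
        + (W x : ℂ) * u x)
    (u : V → ℂ) (hu : (Function.support u).Finite) :
    (∑' x, μ x * (We x + W x) * ‖u x‖ ^ 2)
      ≤ (∑' x, (μ x : ℂ) * H u x * starRingEnd ℂ (u x)).re := by
  classical
  set S : Finset V := hu.toFinset with hS
  have hmemS : ∀ x, x ∈ S ↔ u x ≠ 0 := by
    intro x; simp [hS, Function.mem_support]
  have huS : ∀ x, x ∉ S → u x = 0 := by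
    intro x hx; by_contra h; exact hx ((hmemS x).2 h)
  set N : V → Finset V := fun x => (hb_locfin x).toFinset with hN
  have hmemN : ∀ x y, y ∈ N x ↔ 0 < b x y := by
    intro x y; simp [hN]
  set F : Finset V := S ∪ S.biUnion N with hF
  have hSF : S ⊆ F := Finset.subset_union_left
  have hNF : ∀ x ∈ S, ∀ y, 0 < b x y → y ∈ F := by
    intro x hx y hb
    exact Finset.mem_union_right _ (Finset.mem_biUnion.2 ⟨x, hx, (hmemN x y).2 hb⟩)
  set ph : V → V → ℂ := fun x y => Complex.exp (θ x y * Complex.I) with hph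
  set t : V → V → ℝ := fun x y => ‖u x - ph x y * u y‖ ^ 2 with ht
  have ht_nonneg : ∀ x y, 0 ≤ t x y := fun x y => sq_nonneg _
  have ht_zero : ∀ x y, u x = 0 → u y = 0 → t x y = 0 := by
    intro x y h1 h2; simp [ht, h1, h2]
  set β : L → ℝ := fun l => sInf ((fun e : V × V => b e.1 e.2) '' (El l : Set (V × V)))
    with hβ
  have hβ_nonneg : ∀ l, 0 ≤ β l := by
    intro l
    apply Real.sInf_nonneg
    rintro x ⟨e, _, rfl⟩
    exact hb_nonneg _ _
  have hβ_le : ∀ l, ∀ e ∈ El l, β l ≤ b e.1 e.2 := by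
    intro l e he
    apply csInf_le
    · exact ⟨0, by rintro x ⟨e', _, rfl⟩; exact hb_nonneg _ _⟩
    · exact ⟨e, by simpa using he, rfl⟩
  set g : L → ℝ := fun l => p l * β l with hg
  have hg_nonneg : ∀ l, 0 ≤ g l := fun l => mul_nonneg (hp_nonneg l) (hβ_nonneg l)
  have hWe' : ∀ x, We x = (1 / m) * ∑ᶠ l ∈ {l | x ∈ Vl l}, g l := fun x => hWe x
  have hp' : ∀ l, p l * ∑ x ∈ Vl l, μ x * ‖u x‖ ^ 2
      ≤ (1 / 2) * ∑ e ∈ El l, t e.1 e.2 := by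
    intro l
    simpa only [ht, hph] using hp l u
  -- finiteness of the set of subgraphs containing a given edge
  have hfinΛ : ∀ x y, 0 < b x y → {l | (x, y) ∈ El l}.Finite := by
    intro x y hb
    refine Set.finite_of_ncard_ne_zero ?_
    have := (hdeg x y hb).1
    omega
  have hEdF : ∀ l, ∀ e ∈ El l, (e.1 ∈ S ∨ e.2 ∈ S) → e.1 ∈ F ∧ e.2 ∈ F := by
    intro l e he hcase
    have hb : 0 < b e.1 e.2 := (hEl l e he).1
    rcases hcase with h1 | h2
    · exact ⟨hSF h1, hNF e.1 h1 e.2 hb⟩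
    · have hb' : 0 < b e.2 e.1 := by rwa [← hb_symm]
      exact ⟨hNF e.2 h2 e.1 hb', hSF h2⟩
  -- the finite set of "relevant" subgraphs
  have hAfin : {l | ∃ e ∈ El l, e.1 ∈ S ∨ e.2 ∈ S}.Finite := by
    set E0 : Finset (V × V) := (F ×ˢ F).filter (fun e : V × V => 0 < b e.1 e.2) with hE0
    have hE0b : ∀ e ∈ (E0 : Set (V × V)), 0 < b e.1 e.2 := by
      intro e he
      simp only [hE0, Finset.mem_coe, Finset.mem_filter] at he
      exact he.2
    have hsub : {l | ∃ e ∈ El l, e.1 ∈ S ∨ e.2 ∈ S}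
        ⊆ ⋃ e ∈ (E0 : Set (V × V)), {l | ((e : V × V).1, e.2) ∈ El l} := by
      rintro l ⟨e, he, hcase⟩
      have hb : 0 < b e.1 e.2 := (hEl l e he).1
      have he1 : e.1 ∈ F ∧ e.2 ∈ F := by
        rcases hcase with h1 | h2
        · exact ⟨hSF h1, hNF e.1 h1 e.2 hb⟩
        · have hb' : 0 < b e.2 e.1 := by rwa [← hb_symm]
          exact ⟨hNF e.2 h2 e.1 hb', hSF h2⟩
      refine Set.mem_biUnion (x := e) ?_ ?_
      · simp only [hE0, Finset.mem_coe, Finset.mem_filter, Finset.mem_product]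
        exact ⟨⟨he1.1, he1.2⟩, hb⟩
      · simpa using he
    exact Set.Finite.subset
      (Set.Finite.biUnion E0.finite_toSet (fun e he => hfinΛ e.1 e.2 (hE0b e he))) hsub
  set Λt : Finset L := hAfin.toFinset with hΛt
  have hΛt_mem : ∀ l, l ∈ Λt ↔ ∃ e ∈ El l, e.1 ∈ S ∨ e.2 ∈ S := by
    intro l; simp [hΛt]
  -- delta function argument: positive `p l` forces an edge at every vertex of `Vl l`
  have hdelta : ∀ l, ∀ x ∈ Vl l, 0 < p l → ∃ e ∈ El l, e.1 = x ∨ e.2 = x := by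
    intro l x hx hpl
    by_contra hcon
    push_neg at hcon
    have h0 := hp l (fun z => if z = x then 1 else 0)
    have hrhs : ∑ e ∈ El l,
        ‖(if e.1 = x then (1:ℂ) else 0) - Complex.exp (θ e.1 e.2 * Complex.I) *
          (if e.2 = x then (1:ℂ) else 0)‖ ^ 2 = 0 := by
      refine Finset.sum_eq_zero fun e he => ?_
      obtain ⟨h1, h2⟩ := hcon e he
      simp [h1, h2]
    have hlhs : ∑ z ∈ Vl l, μ z * ‖(if z = x then (1:ℂ) else 0)‖ ^ 2 = μ x := by
      rw [Finset.sum_eq_single_of_mem x hx]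
      · simp
      · intro z hz hne; simp [hne]
    rw [hlhs, hrhs] at h0
    nlinarith [hμ x, hpl]
  -- key pointwise bound on the effective potential
  have hWe_le : ∀ x ∈ S, We x
      ≤ (1 / m) * ∑ l ∈ Λt.filter (fun l => x ∈ Vl l), g l := by
    intro x hxS
    rw [hWe' x]
    rcases Set.finite_or_infinite ({l | x ∈ Vl l} ∩ Function.support g) with hfin | hinf
    · rw [finsum_mem_eq_sum _ hfin]
      refine mul_le_mul_of_nonneg_left ?_ (by positivity)
      refine Finset.sum_le_sum_of_subset_of_nonneg ?_ (fun l _ _ => hg_nonneg l)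
      intro l hl
      rw [Set.Finite.mem_toFinset] at hl
      obtain ⟨hxVl, hgl⟩ := hl
      have hpl : 0 < p l := by
        rcases lt_or_eq_of_le (hp_nonneg l) with h | h
        · exact h
        · exact absurd (by simp [hg, ← h]) hgl
      obtain ⟨e, he, hex⟩ := hdelta l x hxVl hpl
      refine Finset.mem_filter.2 ⟨(hΛt_mem l).2 ⟨e, he, ?_⟩, hxVl⟩
      rcases hex with h | h
      · exact Or.inl (h ▸ hxS)
      · exact Or.inr (h ▸ hxS)
    · rw [finsum_mem_eq_zero_of_infinite hinf]
      have : (0:ℝ) ≤ ∑ l ∈ Λt.filter (fun l => x ∈ Vl l), g l :=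
        Finset.sum_nonneg fun l _ => hg_nonneg l
      rw [mul_zero]
      exact mul_nonneg (by positivity) this
  -- the Dirichlet sum
  set Dsum : ℝ := ∑ e ∈ F ×ˢ F, b e.1 e.2 * t e.1 e.2 with hDsum
  -- Step A: the effective-potential sum is bounded by the Dirichlet sum
  have claim3 : ∑ x ∈ S, μ x * We x * ‖u x‖ ^ 2 ≤ (1 / 2) * Dsum := by
    have hm0 : (m : ℝ) ≠ 0 := Nat.cast_ne_zero.2 (by omega)
    have c1 : ∑ x ∈ S, μ x * We x * ‖u x‖ ^ 2
        ≤ (1 / m) * ∑ x ∈ S, (∑ l ∈ Λt.filter (fun l => x ∈ Vl l), g l) * (μ x * ‖u x‖ ^ 2) := by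
      rw [Finset.mul_sum]
      refine Finset.sum_le_sum fun x hx => ?_
      calc μ x * We x * ‖u x‖ ^ 2 = We x * (μ x * ‖u x‖ ^ 2) := by ring
        _ ≤ (1 / m * ∑ l ∈ Λt.filter (fun l => x ∈ Vl l), g l) * (μ x * ‖u x‖ ^ 2) :=
            mul_le_mul_of_nonneg_right (hWe_le x hx) (mul_nonneg (hμ x).le (sq_nonneg _))
        _ = 1 / m * ((∑ l ∈ Λt.filter (fun l => x ∈ Vl l), g l) * (μ x * ‖u x‖ ^ 2)) := by
            ring
    have c2 : ∑ x ∈ S, (∑ l ∈ Λt.filter (fun l => x ∈ Vl l), g l) * (μ x * ‖u x‖ ^ 2)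
        = ∑ l ∈ Λt, g l * ∑ x ∈ S.filter (fun x => x ∈ Vl l), (μ x * ‖u x‖ ^ 2) := by
      simp only [Finset.sum_filter, Finset.sum_mul, Finset.mul_sum]
      rw [Finset.sum_comm]
      refine Finset.sum_congr rfl fun l _ => Finset.sum_congr rfl fun x _ => ?_
      split <;> simp
    have c3 : ∀ l ∈ Λt, g l * ∑ x ∈ S.filter (fun x => x ∈ Vl l), (μ x * ‖u x‖ ^ 2)
        ≤ (1 / 2) * (β l * ∑ e ∈ El l, t e.1 e.2) := by
      intro l _
      have h1 : ∑ x ∈ S.filter (fun x => x ∈ Vl l), (μ x * ‖u x‖ ^ 2)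
          ≤ ∑ x ∈ Vl l, μ x * ‖u x‖ ^ 2 := by
        refine Finset.sum_le_sum_of_subset_of_nonneg
          (fun x hx => (Finset.mem_filter.1 hx).2) (fun x _ _ => ?_)
        have := (hμ x).le
        positivity
      have h3 : g l * ∑ x ∈ S.filter (fun x => x ∈ Vl l), (μ x * ‖u x‖ ^ 2)
          ≤ g l * ∑ x ∈ Vl l, μ x * ‖u x‖ ^ 2 :=
        mul_le_mul_of_nonneg_left h1 (hg_nonneg l)
      have h4 : g l * ∑ x ∈ Vl l, μ x * ‖u x‖ ^ 2
          = β l * (p l * ∑ x ∈ Vl l, μ x * ‖u x‖ ^ 2) := by simp only [hg]; ring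
      have h5 : β l * (p l * ∑ x ∈ Vl l, μ x * ‖u x‖ ^ 2)
          ≤ β l * ((1 / 2) * ∑ e ∈ El l, t e.1 e.2) :=
        mul_le_mul_of_nonneg_left (hp' l) (hβ_nonneg l)
      calc g l * ∑ x ∈ S.filter (fun x => x ∈ Vl l), (μ x * ‖u x‖ ^ 2)
          ≤ g l * ∑ x ∈ Vl l, μ x * ‖u x‖ ^ 2 := h3
        _ = β l * (p l * ∑ x ∈ Vl l, μ x * ‖u x‖ ^ 2) := h4
        _ ≤ β l * ((1 / 2) * ∑ e ∈ El l, t e.1 e.2) := h5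
        _ = (1 / 2) * (β l * ∑ e ∈ El l, t e.1 e.2) := by ring
    have c4 : ∀ l, β l * ∑ e ∈ El l, t e.1 e.2
        = ∑ e ∈ (El l).filter (fun e => e.1 ∈ S ∨ e.2 ∈ S), β l * t e.1 e.2 := by
      intro l
      rw [Finset.mul_sum]
      refine (Finset.sum_filter_of_ne fun e he hne => ?_).symm
      by_contra hcond
      push_neg at hcond
      exact hne (by rw [ht_zero e.1 e.2 (huS _ hcond.1) (huS _ hcond.2), mul_zero])
    have c5 : ∀ l, (El l).filter (fun e => e.1 ∈ S ∨ e.2 ∈ S)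
        = (F ×ˢ F).filter (fun e => e ∈ El l ∧ (e.1 ∈ S ∨ e.2 ∈ S)) := by
      intro l
      ext e
      simp only [Finset.mem_filter, Finset.mem_product]
      constructor
      · rintro ⟨he, hc⟩
        exact ⟨hEdF l e he hc, he, hc⟩
      · rintro ⟨-, he, hc⟩
        exact ⟨he, hc⟩
    have c6 : ∑ l ∈ Λt, (1 / 2) *
          ∑ e ∈ (F ×ˢ F).filter (fun e => e ∈ El l ∧ (e.1 ∈ S ∨ e.2 ∈ S)), β l * t e.1 e.2
        = (1 / 2) * ∑ e ∈ F ×ˢ F,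
            (∑ l ∈ Λt.filter (fun l => e ∈ El l ∧ (e.1 ∈ S ∨ e.2 ∈ S)), β l) * t e.1 e.2 := by
      rw [← Finset.mul_sum]
      congr 1
      simp only [Finset.sum_filter, Finset.sum_mul]
      rw [Finset.sum_comm]
      refine Finset.sum_congr rfl fun e _ => Finset.sum_congr rfl fun l _ => ?_
      split <;> simp
    have c7 : ∀ e ∈ F ×ˢ F,
        (∑ l ∈ Λt.filter (fun l => e ∈ El l ∧ (e.1 ∈ S ∨ e.2 ∈ S)), β l) * t e.1 e.2
          ≤ ((m : ℝ) * b e.1 e.2) * t e.1 e.2 := by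
      intro e _
      rcases Finset.eq_empty_or_nonempty
          (Λt.filter (fun l => e ∈ El l ∧ (e.1 ∈ S ∨ e.2 ∈ S))) with hemp | ⟨l₀, hl₀⟩
      · rw [hemp]
        simp only [Finset.sum_empty, zero_mul]
        have h1 : 0 ≤ b e.1 e.2 := hb_nonneg _ _
        have h2 : 0 ≤ t e.1 e.2 := ht_nonneg _ _
        positivity
      · have hel₀ : e ∈ El l₀ := (Finset.mem_filter.1 hl₀).2.1
        have hb : 0 < b e.1 e.2 := (hEl l₀ e hel₀).1
        have hfin := hfinΛ e.1 e.2 hb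
        have hcard : (Λt.filter (fun l => e ∈ El l ∧ (e.1 ∈ S ∨ e.2 ∈ S))).card ≤ m := by
          calc (Λt.filter (fun l => e ∈ El l ∧ (e.1 ∈ S ∨ e.2 ∈ S))).card
              ≤ hfin.toFinset.card := by
                refine Finset.card_le_card fun l hl => ?_
                rw [Set.Finite.mem_toFinset]
                exact (Finset.mem_filter.1 hl).2.1
            _ = {l | (e.1, e.2) ∈ El l}.ncard := (Set.ncard_eq_toFinset_card _ hfin).symm
            _ ≤ m := (hdeg e.1 e.2 hb).2
        have hsum : ∑ l ∈ Λt.filter (fun l => e ∈ El l ∧ (e.1 ∈ S ∨ e.2 ∈ S)), β l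
            ≤ (Λt.filter (fun l => e ∈ El l ∧ (e.1 ∈ S ∨ e.2 ∈ S))).card • b e.1 e.2 :=
          Finset.sum_le_card_nsmul _ _ _ (fun l hl => hβ_le l e (Finset.mem_filter.1 hl).2.1)
        have hsum' : ∑ l ∈ Λt.filter (fun l => e ∈ El l ∧ (e.1 ∈ S ∨ e.2 ∈ S)), β l
            ≤ (m : ℝ) * b e.1 e.2 := by
          refine hsum.trans ?_
          rw [nsmul_eq_mul]
          exact mul_le_mul_of_nonneg_right (by exact_mod_cast hcard) (hb_nonneg _ _)
        exact mul_le_mul_of_nonneg_right hsum' (ht_nonneg _ _)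
    calc ∑ x ∈ S, μ x * We x * ‖u x‖ ^ 2
        ≤ (1 / m) * ∑ x ∈ S, (∑ l ∈ Λt.filter (fun l => x ∈ Vl l), g l) * (μ x * ‖u x‖ ^ 2) :=
          c1
      _ = (1 / m) * ∑ l ∈ Λt, g l * ∑ x ∈ S.filter (fun x => x ∈ Vl l), (μ x * ‖u x‖ ^ 2) := by
          rw [c2]
      _ ≤ (1 / m) * ∑ l ∈ Λt, (1 / 2) * (β l * ∑ e ∈ El l, t e.1 e.2) :=
          mul_le_mul_of_nonneg_left (Finset.sum_le_sum c3) (by positivity)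
      _ = (1 / m) * ∑ l ∈ Λt, (1 / 2) *
            ∑ e ∈ (F ×ˢ F).filter (fun e => e ∈ El l ∧ (e.1 ∈ S ∨ e.2 ∈ S)), β l * t e.1 e.2 := by
          refine congrArg _ (Finset.sum_congr rfl fun l _ => ?_)
          rw [c4 l, c5 l]
      _ = (1 / m) * ((1 / 2) * ∑ e ∈ F ×ˢ F,
            (∑ l ∈ Λt.filter (fun l => e ∈ El l ∧ (e.1 ∈ S ∨ e.2 ∈ S)), β l) * t e.1 e.2) := by
          rw [c6]
      _ ≤ (1 / m) * ((1 / 2) * ∑ e ∈ F ×ˢ F, ((m : ℝ) * b e.1 e.2) * t e.1 e.2) := by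
          refine mul_le_mul_of_nonneg_left
            (mul_le_mul_of_nonneg_left (Finset.sum_le_sum c7) (by norm_num)) (by positivity)
      _ = (1 / 2) * Dsum := by
          simp only [mul_assoc]
          rw [← Finset.mul_sum, hDsum]
          field_simp
  -- Step B: Green's formula for the quadratic form
  have claim1 : (∑' x, (μ x : ℂ) * H u x * starRingEnd ℂ (u x)).re
      = (1 / 2) * Dsum + ∑ x ∈ S, μ x * W x * ‖u x‖ ^ 2 := by
    have hDsum' : Dsum
        = ∑ x ∈ F, ∑ y ∈ F, b x y * ‖u x - Complex.exp (θ x y * Complex.I) * u y‖ ^ 2 := by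
      rw [hDsum, Finset.sum_product]
    have h1 : (∑' x, (μ x : ℂ) * H u x * starRingEnd ℂ (u x))
        = ∑ x ∈ S, (μ x : ℂ) * H u x * starRingEnd ℂ (u x) :=
      tsum_eq_sum fun x hx => by rw [huS x hx]; simp
    have h2 : ∀ x, x ∈ S → (∑' y, (b x y : ℂ) * (u x - Complex.exp (θ x y * Complex.I) * u y))
        = ∑ y ∈ F, (b x y : ℂ) * (u x - Complex.exp (θ x y * Complex.I) * u y) := by
      intro x hx
      refine tsum_eq_sum fun y hy => ?_
      rcases eq_or_lt_of_le (hb_nonneg x y) with h | h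
      · rw [← h]; simp
      · exact absurd (hNF x hx y h) hy
    have hμne : ∀ x, (μ x : ℂ) ≠ 0 := fun x => Complex.ofReal_ne_zero.2 (hμ x).ne'
    have hconj : ∀ x, (u x) * starRingEnd ℂ (u x) = ((‖u x‖ ^ 2 : ℝ) : ℂ) := by
      intro x
      rw [Complex.mul_conj]
      norm_cast
      rw [← Complex.sq_norm]
    have h3 : ∑ x ∈ S, (μ x : ℂ) * H u x * starRingEnd ℂ (u x)
        = (∑ x ∈ S, (∑ y ∈ F, (b x y : ℂ) * (u x - Complex.exp (θ x y * Complex.I) * u y))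
            * starRingEnd ℂ (u x))
          + ∑ x ∈ S, ((μ x * W x * ‖u x‖ ^ 2 : ℝ) : ℂ) := by
      rw [← Finset.sum_add_distrib]
      refine Finset.sum_congr rfl fun x hx => ?_
      rw [hH, h2 x hx]
      rw [show ((μ x : ℂ)) * (1 / (μ x : ℂ)
            * (∑ y ∈ F, (b x y : ℂ) * (u x - Complex.exp (θ x y * Complex.I) * u y))
            + (W x : ℂ) * u x) * starRingEnd ℂ (u x)
          = (∑ y ∈ F, (b x y : ℂ) * (u x - Complex.exp (θ x y * Complex.I) * u y))
              * starRingEnd ℂ (u x)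
            + (μ x : ℂ) * (W x : ℂ) * (u x * starRingEnd ℂ (u x)) from by
        have hne := hμne x
        rw [mul_add, ← mul_assoc, mul_one_div_cancel hne, one_mul]
        ring]
      congr 1
      rw [hconj x]
      push_cast
      ring
    have hpair : ∀ x y : V,
        (b x y : ℂ) * (u x - Complex.exp (θ x y * Complex.I) * u y) * starRingEnd ℂ (u x)
          + (b y x : ℂ) * (u y - Complex.exp (θ y x * Complex.I) * u x) * starRingEnd ℂ (u y)
        = ((b x y * ‖u x - Complex.exp (θ x y * Complex.I) * u y‖ ^ 2 : ℝ) : ℂ) := by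
      intro x y
      have hc : Complex.exp (θ y x * Complex.I)
          = starRingEnd ℂ (Complex.exp (θ x y * Complex.I)) := by
        rw [hθ y x, ← Complex.exp_conj]
        congr 1
        simp only [map_mul, Complex.conj_ofReal, Complex.conj_I]
        push_cast
        ring
      have he : Complex.exp (θ x y * Complex.I)
          * starRingEnd ℂ (Complex.exp (θ x y * Complex.I)) = 1 := by
        rw [Complex.mul_conj]
        norm_cast
        simp [Complex.normSq_eq_norm_sq, Complex.norm_exp_ofReal_mul_I]
      have hw : ((‖u x - Complex.exp (θ x y * Complex.I) * u y‖ ^ 2 : ℝ) : ℂ)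
          = (u x - Complex.exp (θ x y * Complex.I) * u y)
            * starRingEnd ℂ (u x - Complex.exp (θ x y * Complex.I) * u y) := by
        rw [Complex.mul_conj]
        norm_cast
        rw [← Complex.sq_norm]
      rw [hb_symm y x, hc]
      push_cast [hw]
      simp only [map_sub, map_mul]
      linear_combination (-(b x y : ℂ) * u y * starRingEnd ℂ (u y)) * he
    have hA : ∑ x ∈ S, (∑ y ∈ F, (b x y : ℂ) * (u x - Complex.exp (θ x y * Complex.I) * u y))
          * starRingEnd ℂ (u x)
        = ∑ x ∈ F, ∑ y ∈ F, (b x y : ℂ) * (u x - Complex.exp (θ x y * Complex.I) * u y)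
          * starRingEnd ℂ (u x) := by
      rw [Finset.sum_subset hSF (fun x _ hx => by rw [huS x hx]; simp)]
      exact Finset.sum_congr rfl fun x _ => Finset.sum_mul _ _ _
    set A : ℂ := ∑ x ∈ F, ∑ y ∈ F, (b x y : ℂ) * (u x - Complex.exp (θ x y * Complex.I) * u y)
      * starRingEnd ℂ (u x) with hAdef
    have hswap : A = ∑ x ∈ F, ∑ y ∈ F, (b y x : ℂ)
        * (u y - Complex.exp (θ y x * Complex.I) * u x) * starRingEnd ℂ (u y) := by
      rw [hAdef]
      exact Finset.sum_comm
    have hAA : A + A = ((Dsum : ℝ) : ℂ) := by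
      calc A + A
          = (∑ x ∈ F, ∑ y ∈ F, (b x y : ℂ)
              * (u x - Complex.exp (θ x y * Complex.I) * u y) * starRingEnd ℂ (u x))
            + ∑ x ∈ F, ∑ y ∈ F, (b y x : ℂ)
              * (u y - Complex.exp (θ y x * Complex.I) * u x) * starRingEnd ℂ (u y) := by
            rw [← hAdef, ← hswap]
        _ = ∑ x ∈ F, ∑ y ∈ F,
              ((b x y * ‖u x - Complex.exp (θ x y * Complex.I) * u y‖ ^ 2 : ℝ) : ℂ) := by
            rw [← Finset.sum_add_distrib]
            refine Finset.sum_congr rfl fun x _ => ?_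
            rw [← Finset.sum_add_distrib]
            exact Finset.sum_congr rfl fun y _ => hpair x y
        _ = ((Dsum : ℝ) : ℂ) := by
            rw [hDsum']
            push_cast
            rfl
    have hAre : A.re = (1 / 2) * Dsum := by
      have h := congrArg Complex.re hAA
      rw [Complex.add_re, Complex.ofReal_re] at h
      linarith
    have hC : (∑ x ∈ S, ((μ x * W x * ‖u x‖ ^ 2 : ℝ) : ℂ)).re
        = ∑ x ∈ S, μ x * W x * ‖u x‖ ^ 2 := by
      rw [← Complex.ofReal_sum, Complex.ofReal_re]
    rw [h1, h3, hA, Complex.add_re, hAre, hC]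
  have claim2 : (∑' x, μ x * (We x + W x) * ‖u x‖ ^ 2)
      = ∑ x ∈ S, μ x * We x * ‖u x‖ ^ 2 + ∑ x ∈ S, μ x * W x * ‖u x‖ ^ 2 := by
    rw [tsum_eq_sum (s := S) (fun x hx => by simp [huS x hx])]
    rw [← Finset.sum_add_distrib]
    exact Finset.sum_congr rfl fun x _ => by ring
  rw [claim1, claim2]
  linarith
end
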